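/- Let F be the free group on generators x_1, …, x_{2n} with n ≥ 1, let K be the commutator subgroup of F, and let h = [x_1, x_2]·[x_3, x_4]⋯[x_{2n-1}, x_{2n}]. Then h lies in K and the image of h in the abelianization H_1(K) = K/[K,K] is nontrivial. -/

import Mathlib

/-- The integer Heisenberg group. -/
structure Heis where
  a : ℤ
  b : ℤ
  c : ℤ

namespace Heis

instance : Mul Heis := ⟨fun x y => ⟨x.a + y.a, x.b + y.b, x.c + y.c + x.a * y.b⟩⟩
instance : One Heis := ⟨⟨0, 0, 0⟩⟩
instance : Inv Heis := ⟨fun x => ⟨-x.a, -x.b, -x.c + x.a * x.b⟩⟩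

@[simp] lemma mul_a (x y : Heis) : (x * y).a = x.a + y.a := rfl
@[simp] lemma mul_b (x y : Heis) : (x * y).b = x.b + y.b := rfl
@[simp] lemma mul_c (x y : Heis) : (x * y).c = x.c + y.c + x.a * y.b := rfl
@[simp] lemma one_a : (1 : Heis).a = 0 := rfl
@[simp] lemma one_b : (1 : Heis).b = 0 := rfl
@[simp] lemma one_c : (1 : Heis).c = 0 := rfl
@[simp] lemma inv_a (x : Heis) : (x⁻¹).a = -x.a := rfl
@[simp] lemma inv_b (x : Heis) : (x⁻¹).b = -x.b := rfl
@[simp] lemma inv_c (x : Heis) : (x⁻¹).c = -x.c + x.a * x.b := rfl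

@[ext] lemma ext {x y : Heis} (ha : x.a = y.a) (hb : x.b = y.b) (hc : x.c = y.c) : x = y := by
  cases x; cases y; simp_all

instance : Group Heis where
  mul_assoc x y z := by ext <;> (simp; try ring)
  one_mul x := by ext <;> simp
  mul_one x := by ext <;> simp
  inv_mul_cancel x := by
    show _ * _ = _
    ext <;> (simp; try ring)

/-- Homomorphism to `Multiplicative (ℤ × ℤ)` recording the `a`,`b` entries. -/
def ab : Heis →* Multiplicative (ℤ × ℤ) where
  toFun x := Multiplicative.ofAdd (x.a, x.b)
  map_one' := rfl
  map_mul' x y := by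
    show Multiplicative.ofAdd _ = Multiplicative.ofAdd _ * Multiplicative.ofAdd _
    rw [← ofAdd_add]
    rfl

lemma z_pow (m : ℕ) : (⟨0, 0, 1⟩ : Heis) ^ m = ⟨0, 0, (m : ℤ)⟩ := by
  induction m with
  | zero => rfl
  | succ k ih =>
      rw [pow_succ, ih]
      show Heis.mk _ _ _ = _
      simp only [mk.injEq]
      push_cast
      refine ⟨by simp, by simp, by ring⟩

end Heis

open scoped commutatorElement

/-- Let `F` be the free group on `2n` generators (`n ≥ 1`), indexed by `Fin n × Bool`
(so `x_{2i-1} = of (i, false)` and `x_{2i} = of (i, true)`), let `K` be the commutator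
subgroup of `F`, and let `h = [x_1,x_2]·[x_3,x_4]⋯[x_{2n-1},x_{2n}]`.  Then `h` lies in
`K` and its image in the abelianization `H_1(K) = K/[K,K]` is nontrivial. -/
theorem product_of_commutators_nontrivial_in_abelianization_of_commutator_subgroup
    (n : ℕ) (hn : 1 ≤ n)
    (h : FreeGroup (Fin n × Bool))
    (hh : h = ((List.finRange n).map fun i =>
      ⁅FreeGroup.of (i, false), FreeGroup.of (i, true)⁆).prod) :
    ∃ hmem : h ∈ commutator (FreeGroup (Fin n × Bool)),
      Abelianization.of (⟨h, hmem⟩ : commutator (FreeGroup (Fin n × Bool))) ≠ 1 := by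
  -- membership in the commutator subgroup
  have hmem : h ∈ commutator (FreeGroup (Fin n × Bool)) := by
    rw [hh]
    apply list_prod_mem
    intro x hx
    simp only [List.mem_map] at hx
    obtain ⟨i, -, rfl⟩ := hx
    exact Subgroup.commutator_mem_commutator (Subgroup.mem_top _) (Subgroup.mem_top _)
  refine ⟨hmem, ?_⟩
  -- the homomorphism to the Heisenberg group
  let f : FreeGroup (Fin n × Bool) →* Heis := FreeGroup.lift (fun p => if p.2 then ⟨0, 1, 0⟩ else ⟨1, 0, 0⟩)
  -- elements of the commutator subgroup have zero `a` and `b` entries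
  have hab : ∀ k ∈ commutator (FreeGroup (Fin n × Bool)), (f k).a = 0 ∧ (f k).b = 0 := by
    intro k hk
    have := Abelianization.commutator_subset_ker (Heis.ab.comp f) hk
    have h2 : Heis.ab (f k) = 1 := this
    have h3 : ((f k).a, (f k).b) = ((0 : ℤ), (0 : ℤ)) := congrArg Multiplicative.toAdd h2
    exact ⟨congrArg Prod.fst h3, congrArg Prod.snd h3⟩
  -- the `c`-entry homomorphism on the commutator subgroup
  let ψ : (commutator (FreeGroup (Fin n × Bool))) →* Multiplicative ℤ :=
    { toFun := fun k => Multiplicative.ofAdd (f (k : FreeGroup (Fin n × Bool))).c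
      map_one' := by simp
      map_mul' := by
        intro x y
        have hx := (hab x x.2).1
        show Multiplicative.ofAdd _ = Multiplicative.ofAdd _ * Multiplicative.ofAdd _
        rw [← ofAdd_add]
        congr 1
        push_cast
        rw [map_mul, Heis.mul_c, hx]
        ring }
  -- compute f h
  have hfh : f h = ⟨0, 0, (n : ℤ)⟩ := by
    rw [hh, map_list_prod, List.map_map]
    have : ((List.finRange n).map
        (f ∘ fun i => ⁅FreeGroup.of (i, false), FreeGroup.of (i, true)⁆)) =
        List.replicate n (⟨0, 0, 1⟩ : Heis) := by
      rw [List.eq_replicate_iff]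
      constructor
      · simp
      · intro x hx
        simp only [List.mem_map, Function.comp_apply] at hx
        obtain ⟨i, -, rfl⟩ := hx
        show f (_ * _ * _⁻¹ * _⁻¹) = _
        simp only [map_mul, map_inv, f, FreeGroup.lift_apply_of]
        ext <;> simp
    rw [this, List.prod_replicate, Heis.z_pow]
  intro hcontra
  have := congrArg (Abelianization.lift ψ) hcontra
  rw [Abelianization.lift_apply_of, map_one] at this
  have h5 : Multiplicative.ofAdd (f h).c = (1 : Multiplicative ℤ) := this
  rw [hfh] at h5
  have h6 : (n : ℤ) = 0 := by
    have := congrArg Multiplicative.toAdd h5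
    simpa using this
  omega
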